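/- Let G be a finite simple graph and let 𝒫 = {P₁,…,P_h} be a partition of V(G) such that each part P_i is connected in G and has at most p vertices. Then tw(G/𝒫) ≥ tw(G)/p, where G/𝒫 is the quotient graph obtained by contracting each part to a single vertex. Equivalently, p·(tw(G/𝒫)+1) ≥ tw(G)+1. -/
import Mathlib


open SimpleGraph

/-- Maximum degree of a graph on a finite vertex type. -/
noncomputable def maxDeg {V : Type} (G : SimpleGraph V) : ℕ :=
  sSup {d | ∃ v : V, (G.neighborSet v).ncard = d}

/-- `G` has a tree-decomposition of width at most `w`. -/
def HasTreewidthAtMost {V : Type} (G : SimpleGraph V) (w : ℕ) : Prop :=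
  ∃ (ι : Type) (T : SimpleGraph ι) (B : ι → Set V),
    T.Connected ∧ T.IsAcyclic ∧
    (∀ v : V, ∃ i, v ∈ B i) ∧
    (∀ u v : V, G.Adj u v → ∃ i, u ∈ B i ∧ v ∈ B i) ∧
    (∀ v : V, (T.induce {i | v ∈ B i}).Connected) ∧
    (∀ i, (B i).ncard ≤ w + 1)

/-- Treewidth. -/
noncomputable def treewidth {V : Type} (G : SimpleGraph V) : ℕ :=
  sInf {w | HasTreewidthAtMost G w}

/-- The quotient of `G` by the partition given by the fibers of `f`. -/
def quotGraph {V ι : Type} (G : SimpleGraph V) (f : V → ι) : SimpleGraph ι :=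
  SimpleGraph.fromRel (fun i j => ∃ u v : V, f u = i ∧ f v = j ∧ G.Adj u v)

/-- `H` is an induced minor of `G` (branch-set model). -/
def IsInducedMinor {W V : Type} (H : SimpleGraph W) (G : SimpleGraph V) : Prop :=
  ∃ B : W → Set V,
    (∀ w, (B w).Nonempty) ∧
    (∀ w, (G.induce (B w)).Connected) ∧
    (∀ w w', w ≠ w' → Disjoint (B w) (B w')) ∧
    (∀ w w', w ≠ w' →
      (H.Adj w w' ↔ ∃ u ∈ B w, ∃ v ∈ B w', G.Adj u v))

/-- `H` is a minor of `G` (branch-set model). -/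
def IsMinor {W V : Type} (H : SimpleGraph W) (G : SimpleGraph V) : Prop :=
  ∃ B : W → Set V,
    (∀ w, (B w).Nonempty) ∧
    (∀ w, (G.induce (B w)).Connected) ∧
    (∀ w w', w ≠ w' → Disjoint (B w) (B w')) ∧
    (∀ w w', H.Adj w w' → ∃ u ∈ B w, ∃ v ∈ B w', G.Adj u v)

/-- Planarity via Wagner's theorem: no `K₅` and no `K₃,₃` minor. -/
def IsPlanar {V : Type} (G : SimpleGraph V) : Prop :=
  ¬ IsMinor (⊤ : SimpleGraph (Fin 5)) G ∧
  ¬ IsMinor (completeBipartiteGraph (Fin 3) (Fin 3)) G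

/-- The 1-subdivision of a graph: each edge is replaced by a path of length 2. -/
def oneSubdivision {V : Type} (G : SimpleGraph V) : SimpleGraph (V ⊕ G.edgeSet) :=
  SimpleGraph.fromRel (fun a b =>
    ∃ (v : V) (e : G.edgeSet), v ∈ (e : Sym2 V) ∧ a = Sum.inl v ∧ b = Sum.inr e)

/-- Every connected component of the spanning subgraph with edge set `F` that contains
an edge of `F` has at most `c` vertices. -/
def HasClusteredComponents {V : Type} (F : Set (Sym2 V)) (c : ℕ) : Prop :=
  ∀ v : V, (∃ e ∈ F, v ∈ e) →
    {u | (SimpleGraph.fromEdgeSet F).Reachable v u}.ncard ≤ c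

/-- `F` is a partition of the edge set of `G` into `h` (possibly empty) classes. -/
def IsEdgePartition {V : Type} (G : SimpleGraph V) {h : ℕ} (F : Fin h → Set (Sym2 V)) : Prop :=
  (∀ i, F i ⊆ G.edgeSet) ∧ (∀ e ∈ G.edgeSet, ∃! i, e ∈ F i)

/-- Chekuri–Chuzhoy degree-3 treewidth sparsifier, with constant `δ`. -/
def SparsifierHyp (δ : ℝ) : Prop :=
  ∀ (V : Type) [Fintype V] (H : SimpleGraph V),
    ∃ H' : SimpleGraph V, H' ≤ H ∧ maxDeg H' ≤ 3 ∧
      (treewidth H : ℝ) / Real.log (treewidth H) ^ δ ≤ (treewidth H' : ℝ)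

/-- Korhonen's theorem, with constant `γ`: a graph excluding some `k`-vertex planar graph
as an induced minor has treewidth at most `k^γ · 2^(Δ^5)`. -/
def KorhonenHyp (γ : ℝ) : Prop :=
  ∀ (V : Type) [Fintype V] (G : SimpleGraph V) (k : ℕ),
    (∃ H : SimpleGraph (Fin k), IsPlanar H ∧ ¬ IsInducedMinor H G) →
    (treewidth G : ℝ) ≤ (k : ℝ) ^ γ * 2 ^ ((maxDeg G : ℝ) ^ 5)

/-- The graph `G` restricted to the vertex set `S` (kept on the same vertex type). -/
def within {V : Type} (G : SimpleGraph V) (S : Set V) : SimpleGraph V :=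
  SimpleGraph.fromRel (fun a b => a ∈ S ∧ b ∈ S ∧ G.Adj a b)

/-- `IterDepthLE G h d S n` : the iterated-BFS process of width `h`, stopping at weak
diameter at most `d` (measured in `G`), applied to the vertex set `S`, has depth at most `n`
(whatever the choices of BFS roots). -/
inductive IterDepthLE {V : Type} (G : SimpleGraph V) (h d : ℕ) : Set V → ℕ → Prop
  | base (S : Set V) (n : ℕ) :
      (∀ u ∈ S, ∀ v ∈ S, G.dist u v ≤ d) → IterDepthLE G h d S n
  | step (S : Set V) (n : ℕ) :
      (∀ v ∈ S, ∀ i : ℕ,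
        IterDepthLE G h d
          {u | u ∈ S ∧ (within G S).Reachable v u ∧
               i ≤ (within G S).dist v u ∧ (within G S).dist v u < i + h} n) →
      IterDepthLE G h d S (n + 1)

/-- `G` has a tree-partition of width at most `w`. -/
def HasTpwAtMost {V : Type} (G : SimpleGraph V) (w : ℕ) : Prop :=
  ∃ (ι : Type) (T : SimpleGraph ι) (B : ι → Set V),
    T.Connected ∧ T.IsAcyclic ∧
    (∀ v : V, ∃! x, v ∈ B x) ∧
    (∀ u v : V, G.Adj u v → ∃ x y, (x = y ∨ T.Adj x y) ∧ u ∈ B x ∧ v ∈ B y) ∧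
    (∀ x, (B x).ncard ≤ w)

/-- Tree-partition width. -/
noncomputable def tpw {V : Type} (G : SimpleGraph V) : ℕ :=
  sInf {w | HasTpwAtMost G w}

/-- The strong product of two graphs. -/
def strongProd {α β : Type} (G : SimpleGraph α) (H : SimpleGraph β) :
    SimpleGraph (α × β) :=
  SimpleGraph.fromRel (fun x y =>
    (x.1 = y.1 ∨ G.Adj x.1 y.1) ∧ (x.2 = y.2 ∨ H.Adj x.2 y.2))

/-- The Pohoata–Davies `n × n` grid: the `n × n` grid with vertical edges removed and an
apex vertex added for each column, adjacent to all vertices of that column.  A grid vertex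
`(i, j)` lies in column `i` and row `j`. -/
def pdGrid (n : ℕ) : SimpleGraph ((Fin n × Fin n) ⊕ Fin n) :=
  SimpleGraph.fromRel (fun a b =>
    (∃ (i j : Fin n) (hi : (i : ℕ) + 1 < n),
      a = Sum.inl (i, j) ∧ b = Sum.inl (⟨(i : ℕ) + 1, hi⟩, j)) ∨
    (∃ i j : Fin n, a = Sum.inr i ∧ b = Sum.inl (i, j)))

lemma trivialDecomp {V : Type} [Fintype V] (G : SimpleGraph V) :
    HasTreewidthAtMost G (Fintype.card V) := by
  refine ⟨PUnit, ⊥, fun _ => Set.univ, ?_, isAcyclic_bot, fun v => ⟨PUnit.unit, trivial⟩,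
    fun u v _ => ⟨PUnit.unit, trivial, trivial⟩, ?_, ?_⟩
  · exact (SimpleGraph.connected_iff _).mpr ⟨fun u v => by rw [Subsingleton.elim u v], ⟨PUnit.unit⟩⟩
  · intro v
    exact (SimpleGraph.connected_iff _).mpr
      ⟨fun u w => by rw [Subsingleton.elim u w], ⟨⟨PUnit.unit, trivial⟩⟩⟩
  · intro i
    rw [Set.ncard_univ, Nat.card_eq_fintype_card]
    exact Nat.le_succ _

lemma card_preimage_le {V ι : Type} [Fintype V] [Fintype ι] (f : V → ι) (p : ℕ)
    (hsize : ∀ i : ι, (f ⁻¹' {i}).ncard ≤ p) (S : Set ι) :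
    (f ⁻¹' S).ncard ≤ p * S.ncard := by
  classical
  rw [Set.ncard_eq_toFinset_card' (f ⁻¹' S), Set.ncard_eq_toFinset_card' S]
  refine Finset.card_le_mul_card_image_of_maps_to (f := f) (t := S.toFinset) ?_ p ?_
  · intro a ha
    simp only [Set.mem_toFinset, Set.mem_preimage] at ha ⊢
    exact ha
  · intro b _
    calc ({a ∈ (f ⁻¹' S).toFinset | f a = b} : Finset V).card
        ≤ (f ⁻¹' {b}).toFinset.card := by
          apply Finset.card_le_card
          intro a ha
          simp only [Finset.mem_filter, Set.mem_toFinset, Set.mem_preimage,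
            Set.mem_singleton_iff] at ha ⊢
          exact ha.2
      _ ≤ p := by rw [← Set.ncard_eq_toFinset_card']; exact hsize b

/-- contracting a partition into connected parts of size at most `p`
divides the treewidth by at most `p`:  `p·(tw(G/𝒫)+1) ≥ tw(G)+1`. -/
theorem stmt1 {V ι : Type} [Fintype V] [Fintype ι] (G : SimpleGraph V) (p : ℕ)
    (hp : 1 ≤ p) (f : V → ι) (hsurj : Function.Surjective f)
    (hconn : ∀ i : ι, (G.induce (f ⁻¹' {i})).Connected)
    (hsize : ∀ i : ι, (f ⁻¹' {i}).ncard ≤ p) :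
    treewidth G + 1 ≤ p * (treewidth (quotGraph G f) + 1) := by
  classical
  set w := treewidth (quotGraph G f) with hw
  have h0 : HasTreewidthAtMost (quotGraph G f) (Fintype.card ι) := trivialDecomp _
  have hmem : HasTreewidthAtMost (quotGraph G f) w :=
    Nat.sInf_mem (⟨Fintype.card ι, h0⟩ :
      {w | HasTreewidthAtMost (quotGraph G f) w}.Nonempty)
  obtain ⟨κ, T, B, hTconn, hTac, hcover, hedge, hcoh, hbags⟩ := hmem
  have hG : HasTreewidthAtMost G (p * (w + 1) - 1) := by
    refine ⟨κ, T, fun x => f ⁻¹' (B x), hTconn, hTac, ?_, ?_, ?_, ?_⟩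
    · intro v
      obtain ⟨x, hx⟩ := hcover (f v)
      exact ⟨x, hx⟩
    · intro u v huv
      by_cases hne : f u = f v
      · obtain ⟨x, hx⟩ := hcover (f v)
        exact ⟨x, by rw [Set.mem_preimage, hne]; exact hx, hx⟩
      · have : (quotGraph G f).Adj (f u) (f v) :=
          ⟨hne, Or.inl ⟨u, v, rfl, rfl, huv⟩⟩
        obtain ⟨x, hx1, hx2⟩ := hedge _ _ this
        exact ⟨x, hx1, hx2⟩
    · intro v
      exact hcoh (f v)
    · intro x
      show (f ⁻¹' (B x)).ncard ≤ p * (w + 1) - 1 + 1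
      have h1 : (f ⁻¹' (B x)).ncard ≤ p * (B x).ncard := card_preimage_le f p hsize _
      have h2 : p * (B x).ncard ≤ p * (w + 1) := Nat.mul_le_mul_left p (hbags x)
      have h3 : p * (w + 1) - 1 + 1 = p * (w + 1) := by
        have : 0 < p * (w + 1) := Nat.mul_pos hp (Nat.succ_pos w)
        omega
      omega
  have : treewidth G ≤ p * (w + 1) - 1 := Nat.sInf_le hG
  have h1 : 0 < p * (w + 1) := Nat.mul_pos hp (Nat.succ_pos w)
  omega
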